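/- Let s₀, s₁, s₂ be positive integers, extended to ℤ/12 by s_i = s_{i mod 3}. If there exist nonnegative integers λ₀,...,λ₁₁ such that s_i = λ_{i-3} + λ_{i-2} + λ_{i-1} + λ_i for all i ∈ ℤ/12 (indices mod 12), then s₀ + s₁ + s₂ ≤ 4·min(s₀, s₁, s₂). -/

import Mathlib

/-- necessity of `s₀+s₁+s₂ ≤ 4·min` for solvability of the cyclic
12-equation Diophantine system (Theorem 4 of the paper). -/
theorem stmt_1 (s0 s1 s2 : ℕ)
    (h0 : 0 < s0) (h1 : 0 < s1) (h2 : 0 < s2)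
    (s : ZMod 12 → ℕ)
    (hs : ∀ i : ZMod 12,
      s i = if i.val % 3 = 0 then s0 else if i.val % 3 = 1 then s1 else s2)
    (hlam : ∃ lam : ZMod 12 → ℕ,
      ∀ i : ZMod 12, s i = lam (i - 3) + lam (i - 2) + lam (i - 1) + lam i) :
    s0 + s1 + s2 ≤ 4 * min s0 (min s1 s2) := by
  obtain ⟨lam, hl⟩ := hlam
  have e0 : s0 = lam 9 + lam 10 + lam 11 + lam 0 := by
    have h := hl 0
    rw [show ((0:ZMod 12)-3)=(9:ZMod 12) by decide, show ((0:ZMod 12)-2)=(10:ZMod 12) by decide, show ((0:ZMod 12)-1)=(11:ZMod 12) by decide, hs 0] at h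
    simpa using h
  have e1 : s1 = lam 10 + lam 11 + lam 0 + lam 1 := by
    have h := hl 1
    rw [show ((1:ZMod 12)-3)=(10:ZMod 12) by decide, show ((1:ZMod 12)-2)=(11:ZMod 12) by decide, show ((1:ZMod 12)-1)=(0:ZMod 12) by decide, hs 1] at h
    exact h
  have e2 : s2 = lam 11 + lam 0 + lam 1 + lam 2 := by
    have h := hl 2
    rw [show ((2:ZMod 12)-3)=(11:ZMod 12) by decide, show ((2:ZMod 12)-2)=(0:ZMod 12) by decide, show ((2:ZMod 12)-1)=(1:ZMod 12) by decide, hs 2] at h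
    exact h
  have e3 : s0 = lam 0 + lam 1 + lam 2 + lam 3 := by
    have h := hl 3
    rw [show ((3:ZMod 12)-3)=(0:ZMod 12) by decide, show ((3:ZMod 12)-2)=(1:ZMod 12) by decide, show ((3:ZMod 12)-1)=(2:ZMod 12) by decide, hs 3] at h
    exact h
  have e4 : s1 = lam 1 + lam 2 + lam 3 + lam 4 := by
    have h := hl 4
    rw [show ((4:ZMod 12)-3)=(1:ZMod 12) by decide, show ((4:ZMod 12)-2)=(2:ZMod 12) by decide, show ((4:ZMod 12)-1)=(3:ZMod 12) by decide, hs 4] at h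
    exact h
  have e5 : s2 = lam 2 + lam 3 + lam 4 + lam 5 := by
    have h := hl 5
    rw [show ((5:ZMod 12)-3)=(2:ZMod 12) by decide, show ((5:ZMod 12)-2)=(3:ZMod 12) by decide, show ((5:ZMod 12)-1)=(4:ZMod 12) by decide, hs 5] at h
    exact h
  have e6 : s0 = lam 3 + lam 4 + lam 5 + lam 6 := by
    have h := hl 6
    rw [show ((6:ZMod 12)-3)=(3:ZMod 12) by decide, show ((6:ZMod 12)-2)=(4:ZMod 12) by decide, show ((6:ZMod 12)-1)=(5:ZMod 12) by decide, hs 6] at h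
    exact h
  have e7 : s1 = lam 4 + lam 5 + lam 6 + lam 7 := by
    have h := hl 7
    rw [show ((7:ZMod 12)-3)=(4:ZMod 12) by decide, show ((7:ZMod 12)-2)=(5:ZMod 12) by decide, show ((7:ZMod 12)-1)=(6:ZMod 12) by decide, hs 7] at h
    exact h
  have e8 : s2 = lam 5 + lam 6 + lam 7 + lam 8 := by
    have h := hl 8
    rw [show ((8:ZMod 12)-3)=(5:ZMod 12) by decide, show ((8:ZMod 12)-2)=(6:ZMod 12) by decide, show ((8:ZMod 12)-1)=(7:ZMod 12) by decide, hs 8] at h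
    exact h
  have e9 : s0 = lam 6 + lam 7 + lam 8 + lam 9 := by
    have h := hl 9
    rw [show ((9:ZMod 12)-3)=(6:ZMod 12) by decide, show ((9:ZMod 12)-2)=(7:ZMod 12) by decide, show ((9:ZMod 12)-1)=(8:ZMod 12) by decide, hs 9] at h
    exact h
  have e10 : s1 = lam 7 + lam 8 + lam 9 + lam 10 := by
    have h := hl 10
    rw [show ((10:ZMod 12)-3)=(7:ZMod 12) by decide, show ((10:ZMod 12)-2)=(8:ZMod 12) by decide, show ((10:ZMod 12)-1)=(9:ZMod 12) by decide, hs 10] at h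
    exact h
  have e11 : s2 = lam 8 + lam 9 + lam 10 + lam 11 := by
    have h := hl 11
    rw [show ((11:ZMod 12)-3)=(8:ZMod 12) by decide, show ((11:ZMod 12)-2)=(9:ZMod 12) by decide, show ((11:ZMod 12)-1)=(10:ZMod 12) by decide, hs 11] at h
    exact h
  omega
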